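/- For t > 0 and x ≥ 0, ∫₀^∞ (1/(2t)) (x + y)^(-1/2) e^(-y/(2t)) dy = √(2π/t) · e^(x/(2t)) · (1 - Φ(√(x/t))), where Φ is the standard normal cumulative distribution function. -/

import Mathlib

open MeasureTheory Real

/-- Standard normal cumulative distribution function. -/
noncomputable def stdNormalCdf (z : ℝ) : ℝ :=
  ∫ u in Set.Iic z, (Real.sqrt (2 * Real.pi))⁻¹ * Real.exp (-u ^ 2 / 2)

theorem projection_n_three_m_one (t x : ℝ) (ht : 0 < t) (hx : 0 ≤ x) :
    ∫ y in Set.Ioi (0:ℝ), (1 / (2 * t)) * (x + y) ^ (-(1:ℝ) / 2) * Real.exp (-y / (2 * t)) =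
      Real.sqrt (2 * Real.pi / t) * Real.exp (x / (2 * t)) *
        (1 - stdNormalCdf (Real.sqrt (x / t))) := by
  set a := Real.sqrt (x / t) with ha
  have ha0 : 0 ≤ a := Real.sqrt_nonneg _
  have hxt : 0 ≤ x / t := div_nonneg hx ht.le
  have ha2 : a ^ 2 = x / t := Real.sq_sqrt hxt
  have hax : t * a ^ 2 = x := by rw [ha2]; field_simp
  -- image of the substitution map
  have himg : (fun u => t * u ^ 2 - x) '' Set.Ioi a = Set.Ioi (0:ℝ) := by
    ext y
    simp only [Set.mem_image, Set.mem_Ioi]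
    constructor
    · rintro ⟨u, hu, rfl⟩
      have h1 : a ^ 2 < u ^ 2 := by nlinarith
      nlinarith
    · intro hy
      have hxy : 0 ≤ (x + y) / t := div_nonneg (by linarith) ht.le
      refine ⟨Real.sqrt ((x + y) / t), ?_, ?_⟩
      · rw [ha]
        exact Real.sqrt_lt_sqrt hxt (by gcongr <;> linarith)
      · rw [Real.sq_sqrt hxy]
        field_simp
        ring
  have hderiv : ∀ u ∈ Set.Ioi a, HasDerivWithinAt (fun u => t * u ^ 2 - x)
      (2 * t * u) (Set.Ioi a) u := by
    intro u hu
    have h1 : HasDerivAt (fun u : ℝ => t * u ^ 2 - x) (t * (2 * u)) u := by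
      simpa using ((hasDerivAt_pow 2 u).const_mul t).sub_const x
    have h2 : t * (2 * u) = 2 * t * u := by ring
    exact (h2 ▸ h1).hasDerivWithinAt
  have hinj : Set.InjOn (fun u => t * u ^ 2 - x) (Set.Ioi a) := by
    intro u hu v hv h
    simp only [Set.mem_Ioi] at hu hv
    simp only at h
    have h2 : (u - v) * (u + v) = 0 := by nlinarith
    rcases mul_eq_zero.mp h2 with h3 | h3
    · linarith
    · linarith
  have key := integral_image_eq_integral_abs_deriv_smul measurableSet_Ioi hderiv hinj
    (fun y => (1 / (2 * t)) * (x + y) ^ (-(1:ℝ) / 2) * Real.exp (-y / (2 * t)))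
  rw [himg] at key
  rw [key]
  have hst : 0 < Real.sqrt t := Real.sqrt_pos.mpr ht
  have hcong : ∀ u ∈ Set.Ioi a,
      |2 * t * u| • ((1 / (2 * t)) * (x + (t * u ^ 2 - x)) ^ (-(1:ℝ) / 2) *
        Real.exp (-(t * u ^ 2 - x) / (2 * t)))
      = (Real.sqrt t)⁻¹ * Real.exp (x / (2 * t)) * Real.exp (-u ^ 2 / 2) := by
    intro u hu
    simp only [Set.mem_Ioi] at hu
    have hu0 : 0 < u := lt_of_le_of_lt ha0 hu
    have h1 : x + (t * u ^ 2 - x) = t * u ^ 2 := by ring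
    have h2 : (t * u ^ 2 : ℝ) ^ (-(1:ℝ) / 2) = (Real.sqrt t * u)⁻¹ := by
      rw [show (-(1:ℝ)/2) = -(1/2) by norm_num,
        Real.rpow_neg (by positivity), ← Real.sqrt_eq_rpow,
        Real.sqrt_mul ht.le, Real.sqrt_sq hu0.le]
    have h3 : -(t * u ^ 2 - x) / (2 * t) = x / (2 * t) + -u ^ 2 / 2 := by
      field_simp; ring
    rw [h1, h2, h3, Real.exp_add, smul_eq_mul,
      abs_of_pos (by positivity)]
    field_simp
  rw [setIntegral_congr_fun measurableSet_Ioi hcong]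
  simp_rw [mul_assoc]
  rw [integral_const_mul, integral_const_mul]
  -- gaussian integral facts
  have hInt : Integrable (fun u : ℝ => Real.exp (-u ^ 2 / 2)) := by
    have := integrable_exp_neg_mul_sq (by norm_num : (0:ℝ) < 1/2)
    convert this using 2 with u
    ring_nf
  have htot : (∫ u : ℝ, Real.exp (-u ^ 2 / 2)) = Real.sqrt (2 * Real.pi) := by
    have := integral_gaussian (1/2 : ℝ)
    rw [show Real.pi / (1/2) = 2 * Real.pi by ring] at this
    rw [← this]
    congr 1 with u
    ring_nf
  have hsplit : (∫ u in Set.Iic a, Real.exp (-u ^ 2 / 2)) +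
      (∫ u in Set.Ioi a, Real.exp (-u ^ 2 / 2)) = Real.sqrt (2 * Real.pi) := by
    rw [← htot]
    exact intervalIntegral.integral_Iic_add_Ioi hInt.integrableOn hInt.integrableOn
  have hcdf : stdNormalCdf a = (Real.sqrt (2 * Real.pi))⁻¹ *
      ∫ u in Set.Iic a, Real.exp (-u ^ 2 / 2) := by
    rw [stdNormalCdf, integral_const_mul]
  have h2pi : 0 < Real.sqrt (2 * Real.pi) := Real.sqrt_pos.mpr (by positivity)
  have hdiv : Real.sqrt (2 * Real.pi / t) = Real.sqrt (2 * Real.pi) / Real.sqrt t :=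
    Real.sqrt_div (by positivity) t
  rw [hcdf, hdiv]
  have hIoi : (∫ u in Set.Ioi a, Real.exp (-u ^ 2 / 2)) =
      Real.sqrt (2 * Real.pi) - ∫ u in Set.Iic a, Real.exp (-u ^ 2 / 2) := by
    linarith
  rw [hIoi]
  field_simp
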